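/- Let {X_n} be the Markov chain on ℤ² where from state x the chain moves to x + (ε(x²),0) or to x + (0,ε(x¹)) each with probability 1/2 (the standard random walk on the Manhattan lattice), started at X₀ = (0,0). Then Y_n := φ(X_{2n}) is the standard simple random walk on ℤ²: the increments Y_{n+1} − Y_n are i.i.d. uniform on {e₁,−e₁,e₂,−e₂}. -/

import Mathlib

open MeasureTheory ProbabilityTheory

/-- `ε j = 1` if `j` is even, `-1` if `j` is odd. -/
def epsZ (j : ℤ) : ℤ := if Even j then 1 else -1

/-- Block-collapsing map `φ(x¹,x²) = (⌊x¹/2⌋, ⌊x²/2⌋)` (floor division). -/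
def phiZ (x : ℤ × ℤ) : ℤ × ℤ := (Int.fdiv x.1 2, Int.fdiv x.2 2)

/-- The Manhattan step selected by a Boolean coin: `true` moves horizontally,
`false` moves vertically. -/
def manhattanStepFun (x : ℤ × ℤ) (b : Bool) : ℤ × ℤ :=
  if b then (x.1 + epsZ x.2, x.2) else (x.1, x.2 + epsZ x.1)

def parB : ℕ → (ℕ → Bool) → Bool
  | 0, _ => false
  | n+1, c => xor (parB n c) (xor (c (2*n)) (c (2*n+1)))

def DB (n : ℕ) (c : ℕ → Bool) : Bool × Bool := (xor (c (2*n)) (parB n c), c (2*n+1))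

def gB : Bool × Bool → ℤ × ℤ
  | (true, true) => (1, 0)
  | (true, false) => (0, -1)
  | (false, true) => (-1, 0)
  | (false, false) => (0, 1)

lemma epsZ_two_mul (a : ℤ) : epsZ (2*a) = 1 := by
  simp [epsZ, even_two_mul]

lemma epsZ_two_mul_add_one (a : ℤ) : epsZ (2*a+1) = -1 := by
  have h : ¬ Even (2*a+1) := by simp only [Int.even_iff]; omega
  simp [epsZ, h]

lemma fdiv_two (x : ℤ) : Int.fdiv x 2 = x / 2 := Int.fdiv_eq_ediv_of_nonneg x (by norm_num)

lemma stepT_ee (a b : ℤ) : manhattanStepFun (2*a, 2*b) true = (2*a+1, 2*b) := by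
  simp [manhattanStepFun, epsZ_two_mul]
lemma stepF_ee (a b : ℤ) : manhattanStepFun (2*a, 2*b) false = (2*a, 2*b+1) := by
  simp [manhattanStepFun, epsZ_two_mul]
lemma stepT_oe (a b : ℤ) : manhattanStepFun (2*a+1, 2*b) true = (2*(a+1), 2*b) := by
  simp [manhattanStepFun, epsZ_two_mul]; ring
lemma stepF_oe (a b : ℤ) : manhattanStepFun (2*a+1, 2*b) false = (2*a+1, 2*(b-1)+1) := by
  simp [manhattanStepFun, epsZ_two_mul_add_one]; ring
lemma stepT_eo (a b : ℤ) : manhattanStepFun (2*a, 2*b+1) true = (2*(a-1)+1, 2*b+1) := by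
  simp [manhattanStepFun, epsZ_two_mul_add_one]; ring
lemma stepF_eo (a b : ℤ) : manhattanStepFun (2*a, 2*b+1) false = (2*a, 2*(b+1)) := by
  simp [manhattanStepFun, epsZ_two_mul]; ring
lemma stepT_oo (a b : ℤ) : manhattanStepFun (2*a+1, 2*b+1) true = (2*a, 2*b+1) := by
  simp [manhattanStepFun, epsZ_two_mul_add_one]
lemma stepF_oo (a b : ℤ) : manhattanStepFun (2*a+1, 2*b+1) false = (2*a+1, 2*b) := by
  simp [manhattanStepFun, epsZ_two_mul_add_one]

lemma parB_congr {n : ℕ} {c c' : ℕ → Bool} (h : ∀ i, i < 2*n → c i = c' i) :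
    parB n c = parB n c' := by
  induction n with
  | zero => rfl
  | succ n ih =>
    have h1 := h (2*n) (by omega)
    have h2 := h (2*n+1) (by omega)
    have h3 := ih (fun i hi => h i (by omega))
    simp only [parB, h1, h2, h3]

lemma DB_congr {n : ℕ} {c c' : ℕ → Bool} (h : ∀ i, i < 2*n+2 → c i = c' i) :
    DB n c = DB n c' := by
  have h1 := h (2*n) (by omega)
  have h2 := h (2*n+1) (by omega)
  have h3 : parB n c = parB n c' := parB_congr (fun i hi => h i (by omega))
  simp only [DB, h1, h2, h3]

section walk

variable {Ω : Type*} (C : ℕ → Ω → Bool) (X : ℕ → Ω → ℤ × ℤ)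
  (hX0 : ∀ ω, X 0 ω = (0, 0))
  (hXrec : ∀ n ω, X (n + 1) ω = manhattanStepFun (X n ω) (C n ω))

include hX0 hXrec

lemma walk_inv (n : ℕ) (ω : Ω) :
    ∃ a b : ℤ, X (2*n) ω =
      if parB n (fun i => C i ω) then (2*a+1, 2*b+1) else (2*a, 2*b) := by
  induction n with
  | zero => exact ⟨0, 0, by simp [parB, hX0]⟩
  | succ n ih =>
    obtain ⟨a, b, h⟩ := ih
    have hstep : X (2*(n+1)) ω =
        manhattanStepFun (manhattanStepFun (X (2*n) ω) (C (2*n) ω)) (C (2*n+1) ω) := by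
      rw [show 2*(n+1) = (2*n+1)+1 by ring, hXrec, hXrec]
    have hpar : parB (n+1) (fun i => C i ω)
        = xor (parB n (fun i => C i ω)) (xor (C (2*n) ω) (C (2*n+1) ω)) := rfl
    rcases hp : parB n (fun i => C i ω) with _ | _ <;> rw [hp] at h <;>
      simp only [if_true, if_false, Bool.false_eq_true, ite_false, ite_true] at h <;>
      rcases h1 : C (2*n) ω with _ | _ <;> rcases h2 : C (2*n+1) ω with _ | _ <;>
      rw [h1, h2, h] at hstep <;> rw [hp, h1, h2] at hpar <;>
      simp only [Bool.xor_false, Bool.xor_true, Bool.false_xor, Bool.true_xor,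
        Bool.not_true, Bool.not_false] at hpar
    -- even: FF, FT, TF, TT
    · exact ⟨a, b+1, by rw [hstep, stepF_ee, stepF_eo, hpar]; simp⟩
    · exact ⟨a-1, b, by rw [hstep, stepF_ee, stepT_eo, hpar]; simp⟩
    · exact ⟨a, b-1, by rw [hstep, stepT_ee, stepF_oe, hpar]; simp⟩
    · exact ⟨a+1, b, by rw [hstep, stepT_ee, stepT_oe, hpar]; simp⟩
    -- odd: FF, FT, TF, TT
    · exact ⟨a, b-1, by rw [hstep, stepF_oo, stepF_oe, hpar]; simp⟩
    · exact ⟨a+1, b, by rw [hstep, stepF_oo, stepT_oe, hpar]; simp⟩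
    · exact ⟨a, b+1, by rw [hstep, stepT_oo, stepF_eo, hpar]; simp⟩
    · exact ⟨a-1, b, by rw [hstep, stepT_oo, stepT_eo, hpar]; simp⟩

lemma inc_formula (n : ℕ) (ω : Ω) :
    phiZ (X (2*(n+1)) ω) - phiZ (X (2*n) ω) = gB (DB n (fun i => C i ω)) := by
  obtain ⟨a, b, h⟩ := walk_inv C X hX0 hXrec n ω
  have hstep : X (2*(n+1)) ω =
      manhattanStepFun (manhattanStepFun (X (2*n) ω) (C (2*n) ω)) (C (2*n+1) ω) := by
    rw [show 2*(n+1) = (2*n+1)+1 by ring, hXrec, hXrec]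
  have hDB : DB n (fun i => C i ω)
      = (xor (C (2*n) ω) (parB n (fun i => C i ω)), C (2*n+1) ω) := rfl
  rcases hp : parB n (fun i => C i ω) with _ | _ <;> rw [hp] at h <;>
    simp only [if_true, if_false, Bool.false_eq_true, ite_false, ite_true] at h <;>
    rcases h1 : C (2*n) ω with _ | _ <;> rcases h2 : C (2*n+1) ω with _ | _ <;>
    rw [h1, h2, h] at hstep <;> rw [hp, h1, h2] at hDB <;>
    simp only [Bool.xor_false, Bool.xor_true, Bool.false_xor, Bool.true_xor,
      Bool.not_true, Bool.not_false] at hDB <;>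
    rw [hstep, hDB, h]
  · rw [stepF_ee, stepF_eo]
    simp [phiZ, fdiv_two, gB, Prod.ext_iff] <;> omega
  · rw [stepF_ee, stepT_eo]
    simp [phiZ, fdiv_two, gB, Prod.ext_iff] <;> omega
  · rw [stepT_ee, stepF_oe]
    simp [phiZ, fdiv_two, gB, Prod.ext_iff] <;> omega
  · rw [stepT_ee, stepT_oe]
    simp [phiZ, fdiv_two, gB, Prod.ext_iff] <;> omega
  · rw [stepF_oo, stepF_oe]
    simp [phiZ, fdiv_two, gB, Prod.ext_iff] <;> omega
  · rw [stepF_oo, stepT_oe]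
    simp [phiZ, fdiv_two, gB, Prod.ext_iff] <;> omega
  · rw [stepT_oo, stepF_eo]
    simp [phiZ, fdiv_two, gB, Prod.ext_iff] <;> omega
  · rw [stepT_oo, stepT_eo]
    simp [phiZ, fdiv_two, gB, Prod.ext_iff] <;> omega

end walk

section prob

variable {Ω : Type*} [MeasurableSpace Ω] (μ : Measure Ω) [IsProbabilityMeasure μ]
  (C : ℕ → Ω → Bool) (hCmeas : ∀ n, Measurable (C n))
  (hCindep : iIndepFun C μ)
  (hCfair : ∀ n, μ {ω | C n ω = true} = 2⁻¹)

/-- extension of a tuple on a finset to a full coin sequence -/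
def extT (T : Finset ℕ) (v : T → Bool) (i : ℕ) : Bool :=
  if h : i ∈ T then v ⟨i, h⟩ else false

include hCmeas hCindep hCfair in
lemma coin_pair (n m : ℕ) (hnm : n ≠ m) (a b : Bool) :
    μ ({ω | C n ω = a} ∩ {ω | C m ω = b}) = 4⁻¹ := by
  have hval : ∀ k (c : Bool), μ {ω | C k ω = c} = 2⁻¹ := by
    intro k c
    cases c
    · have : {ω | C k ω = false} = {ω | C k ω = true}ᶜ := by
        ext ω; simp
      have hms : MeasurableSet {ω | C k ω = true} := (hCmeas k) (MeasurableSet.singleton true)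
      rw [this, prob_compl_eq_one_sub hms, hCfair, ENNReal.one_sub_inv_two]
    · exact hCfair k
  have hind := hCindep.indepFun hnm
  have := hind.measure_inter_preimage_eq_mul (s := {a}) (t := {b})
    (by trivial) (by trivial)
  have heq : ({ω | C n ω = a} ∩ {ω | C m ω = b})
      = (C n ⁻¹' {a}) ∩ (C m ⁻¹' {b}) := rfl
  rw [heq, this]
  show μ {ω | C n ω = a} * μ {ω | C m ω = b} = 4⁻¹
  rw [hval, hval, ← ENNReal.mul_inv (by norm_num) (by norm_num)]
  norm_num


def USet (N : ℕ) (S' : Finset ℕ) (d : ℕ → Bool × Bool) (t : Bool) :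
    Set ({x // x ∈ Finset.range (2*N)} → Bool) :=
  {v | parB N (extT _ v) = t ∧ ∀ k ∈ S', DB k (extT _ v) = d k}

def VSet (N : ℕ) (a b : Bool) : Set ({x // x ∈ ({2*N, 2*N+1} : Finset ℕ)} → Bool) :=
  {w | w ⟨2*N, by simp⟩ = a ∧ w ⟨2*N+1, by simp⟩ = b}

lemma bool_xor_shift (c t a : Bool) : xor c t = a ↔ c = xor a t := by
  cases c <;> cases t <;> cases a <;> decide

include hCmeas hCindep hCfair in
lemma DB_step (N : ℕ) (S' : Finset ℕ) (hS' : ∀ k ∈ S', k < N) (d : ℕ → Bool × Bool) :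
    μ ({ω | DB N (fun i => C i ω) = d N} ∩ ⋂ k ∈ S', {ω | DB k (fun i => C i ω) = d k})
      = 4⁻¹ * μ (⋂ k ∈ S', {ω | DB k (fun i => C i ω) = d k}) := by
  classical
  set E := ⋂ k ∈ S', {ω | DB k (fun i => C i ω) = d k} with hE
  set A := fun t : Bool => {ω | parB N (fun i => C i ω) = t} with hA
  set F := fun t : Bool =>
    {ω | C (2*N) ω = xor (d N).1 t} ∩ {ω | C (2*N+1) ω = (d N).2} with hF
  set f1 : Ω → ({x // x ∈ Finset.range (2*N)} → Bool) := fun ω i => C i ω with hf1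
  set f2 : Ω → ({x // x ∈ ({2*N, 2*N+1} : Finset ℕ)} → Bool) := fun ω i => C i ω with hf2
  have hf1meas : Measurable f1 := measurable_pi_lambda _ (fun i => hCmeas i)
  have hf2meas : Measurable f2 := measurable_pi_lambda _ (fun i => hCmeas i)
  have hdisj : Disjoint (Finset.range (2*N)) ({2*N, 2*N+1} : Finset ℕ) := by
    simp only [Finset.disjoint_left, Finset.mem_range, Finset.mem_insert, Finset.mem_singleton]
    omega
  have hind : IndepFun f1 f2 μ := hCindep.indepFun_finset _ _ hdisj hCmeas
  have hpre1 : ∀ t, f1 ⁻¹' (USet N S' d t) = A t ∩ E := by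
    intro t
    ext ω
    have hext : ∀ i, i < 2*N → extT (Finset.range (2*N)) (f1 ω) i = C i ω := by
      intro i hi
      simp only [extT, Finset.mem_range, hf1]
      rw [dif_pos hi]
    have hpar : parB N (extT _ (f1 ω)) = parB N (fun i => C i ω) :=
      parB_congr (fun i hi => hext i hi)
    have hDBk : ∀ k, k < N → DB k (extT (Finset.range (2*N)) (f1 ω)) = DB k (fun i => C i ω) :=
      fun k hk => DB_congr (fun i hi => hext i (by omega))
    simp only [Set.mem_preimage, USet, Set.mem_setOf_eq, Set.mem_inter_iff, hA, hE,
      Set.mem_iInter, hpar]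
    constructor
    · rintro ⟨h1, h2⟩
      exact ⟨h1, fun k hk => by rw [← hDBk k (hS' k hk)]; exact h2 k hk⟩
    · rintro ⟨h1, h2⟩
      exact ⟨h1, fun k hk => by rw [hDBk k (hS' k hk)]; exact h2 k hk⟩
  have hpre2 : ∀ a b, f2 ⁻¹' (VSet N a b) = {ω | C (2*N) ω = a} ∩ {ω | C (2*N+1) ω = b} := by
    intro a b
    ext ω
    simp only [Set.mem_preimage, VSet, Set.mem_setOf_eq, Set.mem_inter_iff, hf2]
  have hterm : ∀ t, μ ((A t ∩ E) ∩ F t) = μ (A t ∩ E) * 4⁻¹ := by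
    intro t
    have h2 : F t = f2 ⁻¹' (VSet N (xor (d N).1 t) ((d N).2)) := (hpre2 _ _).symm
    rw [← hpre1 t, h2]
    rw [hind.measure_inter_preimage_eq_mul _ _ (.of_discrete) (.of_discrete)]
    rw [hpre2, coin_pair μ C hCmeas hCindep hCfair (2*N) (2*N+1) (by omega)]
  have hdecomp : {ω | DB N (fun i => C i ω) = d N} ∩ E
      = ((A true ∩ E) ∩ F true) ∪ ((A false ∩ E) ∩ F false) := by
    ext ω
    simp only [Set.mem_inter_iff, Set.mem_union, Set.mem_setOf_eq, hA, hF]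
    constructor
    · rintro ⟨hDN, hE'⟩
      rw [show DB N (fun i => C i ω)
          = (xor (C (2*N) ω) (parB N (fun i => C i ω)), C (2*N+1) ω) from rfl,
        Prod.ext_iff] at hDN
      obtain ⟨hx, hy⟩ := hDN
      rw [bool_xor_shift] at hx
      cases hpt : parB N (fun i => C i ω)
      · right; rw [hpt] at hx; exact ⟨⟨rfl, hE'⟩, hx, hy⟩
      · left; rw [hpt] at hx; exact ⟨⟨rfl, hE'⟩, hx, hy⟩
    · rintro (⟨⟨hpt, hE'⟩, hc1, hc2⟩ | ⟨⟨hpt, hE'⟩, hc1, hc2⟩) <;>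
        refine ⟨?_, hE'⟩ <;>
        rw [show DB N (fun i => C i ω)
            = (xor (C (2*N) ω) (parB N (fun i => C i ω)), C (2*N+1) ω) from rfl,
          Prod.ext_iff] <;>
        rw [bool_xor_shift, hpt, hc1] <;> exact ⟨rfl, hc2⟩
  have hAdisj : Disjoint ((A true ∩ E) ∩ F true) ((A false ∩ E) ∩ F false) := by
    rw [Set.disjoint_left]
    rintro ω ⟨⟨h1, -⟩, -⟩ ⟨⟨h2, -⟩, -⟩
    rw [hA] at h1 h2
    simp only [Set.mem_setOf_eq] at h1 h2
    rw [h1] at h2; exact Bool.noConfusion h2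
  have hmeas2 : MeasurableSet ((A false ∩ E) ∩ F false) := by
    have h2 : F false = f2 ⁻¹' (VSet N (xor (d N).1 false) ((d N).2)) := (hpre2 _ _).symm
    rw [← hpre1, h2]
    exact (hf1meas .of_discrete).inter (hf2meas .of_discrete)
  have hEsplit : μ (A true ∩ E) + μ (A false ∩ E) = μ E := by
    have hu : (A true ∩ E) ∪ (A false ∩ E) = E := by
      ext ω
      simp only [Set.mem_union, Set.mem_inter_iff, hA, Set.mem_setOf_eq]
      constructor
      · rintro (⟨-, h⟩ | ⟨-, h⟩) <;> exact h
      · intro h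
        cases hpt : parB N (fun i => C i ω)
        · right; exact ⟨rfl, h⟩
        · left; exact ⟨rfl, h⟩
    have hd : Disjoint (A true ∩ E) (A false ∩ E) := by
      rw [Set.disjoint_left]
      rintro ω ⟨h1, -⟩ ⟨h2, -⟩
      rw [hA] at h1 h2
      simp only [Set.mem_setOf_eq] at h1 h2
      rw [h1] at h2; exact Bool.noConfusion h2
    have hm : MeasurableSet (A false ∩ E) := by
      rw [← hpre1 false]
      exact hf1meas .of_discrete
    rw [← measure_union hd hm, hu]
  rw [hdecomp, measure_union hAdisj hmeas2, hterm, hterm, ← add_mul, hEsplit, mul_comm]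

include hCmeas hCindep hCfair in
lemma DB_joint (N : ℕ) : ∀ (S : Finset ℕ), (∀ k ∈ S, k < N) → ∀ d : ℕ → Bool × Bool,
    μ (⋂ k ∈ S, {ω | DB k (fun i => C i ω) = d k}) = 4⁻¹ ^ S.card := by
  induction N with
  | zero =>
    intro S hS d
    have hSe : S = ∅ := Finset.eq_empty_of_forall_notMem (fun k hk => by
      have := hS k hk; omega)
    subst hSe
    simp
  | succ N ih =>
    intro S hS d
    by_cases hN : N ∈ S
    · have hS'lt : ∀ k ∈ S.erase N, k < N := fun k hk => by
        have h1 := Finset.mem_of_mem_erase hk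
        have h2 := Finset.ne_of_mem_erase hk
        have := hS k h1; omega
      have hsplit : (⋂ k ∈ S, {ω | DB k (fun i => C i ω) = d k})
          = {ω | DB N (fun i => C i ω) = d N}
            ∩ ⋂ k ∈ S.erase N, {ω | DB k (fun i => C i ω) = d k} := by
        conv_lhs => rw [← Finset.insert_erase hN]
        rw [Finset.set_biInter_insert]
      rw [hsplit, DB_step μ C hCmeas hCindep hCfair N (S.erase N) hS'lt d,
        ih (S.erase N) hS'lt d, ← Finset.card_erase_add_one hN, pow_succ, mul_comm]
    · exact ih S (fun k hk => by
        have h1 := hS k hk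
        have h2 : k ≠ N := fun h => hN (h ▸ hk)
        omega) d

include hCmeas hCindep hCfair in
lemma DB_joint' (S : Finset ℕ) (d : ℕ → Bool × Bool) :
    μ (⋂ k ∈ S, {ω | DB k (fun i => C i ω) = d k}) = 4⁻¹ ^ S.card :=
  DB_joint μ C hCmeas hCindep hCfair (S.sup id + 1) S
    (fun k hk => by have := Finset.le_sup (f := id) hk; simp at this; omega) d

include hCmeas hCindep hCfair in
lemma DB_single (n : ℕ) (d : Bool × Bool) :
    μ {ω | DB n (fun i => C i ω) = d} = 4⁻¹ := by
  have := DB_joint' μ C hCmeas hCindep hCfair {n} (fun _ => d)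
  simpa using this

include hCmeas in
lemma DB_meas (n : ℕ) : Measurable (fun ω => DB n (fun i => C i ω)) := by
  have h : (fun ω => DB n (fun i => C i ω))
      = (fun v : {x // x ∈ Finset.range (2*n+2)} → Bool => DB n (extT _ v))
        ∘ (fun ω i => C i ω) := by
    funext ω
    simp only [Function.comp_apply]
    refine (DB_congr (fun i hi => ?_)).symm
    simp only [extT, Finset.mem_range]
    rw [dif_pos hi]
  rw [h]
  exact Measurable.of_discrete.comp (measurable_pi_lambda _ (fun i => hCmeas i))

include hCmeas hCindep hCfair in
lemma DB_indep :
    iIndepFun (fun n ω => DB n (fun i => C i ω)) μ := by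
  classical
  rw [iIndepFun_iff_iIndep]
  have htop : (Prod.instMeasurableSpace : MeasurableSpace (Bool × Bool))
      = MeasurableSpace.generateFrom {s : Set (Bool × Bool) | ∃ d, s = {d}} := by
    refine le_antisymm ?_ ?_
    · intro s _
      have : s = ⋃ d ∈ s, {d} := by simp
      rw [this]
      exact MeasurableSet.biUnion s.to_countable
        (fun d _ => MeasurableSpace.measurableSet_generateFrom ⟨d, rfl⟩)
    · refine MeasurableSpace.generateFrom_le ?_
      rintro s ⟨d, rfl⟩
      exact MeasurableSet.singleton d
  refine iIndepSets.iIndep (fun n => ?_)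
    (fun n => {s | ∃ d : Bool × Bool, s = (fun ω => DB n (fun i => C i ω)) ⁻¹' {d}})
    (fun n => ?_) (fun n => ?_) ?_
  · exact (DB_meas C hCmeas n).comap_le
  · rintro s ⟨d1, rfl⟩ t ⟨d2, rfl⟩ hne
    obtain ⟨ω, h1, h2⟩ := hne
    simp only [Set.mem_preimage, Set.mem_singleton_iff] at h1 h2
    have hdd : d1 = d2 := h1.symm.trans h2
    subst hdd
    exact ⟨d1, by rw [Set.inter_self]⟩
  · rw [htop, MeasurableSpace.comap_generateFrom]
    congr 1
    ext s
    simp only [Set.mem_image, Set.mem_setOf_eq]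
    constructor
    · rintro ⟨u, ⟨d, rfl⟩, rfl⟩; exact ⟨d, rfl⟩
    · rintro ⟨d, rfl⟩; exact ⟨{d}, ⟨d, rfl⟩, rfl⟩
  · rw [iIndepSets_iff]
    intro S f hf
    have hchoice : ∀ k ∈ S, ∃ d : Bool × Bool,
        f k = (fun ω => DB k (fun i => C i ω)) ⁻¹' {d} := hf
    choose dd hdd using hchoice
    set d : ℕ → Bool × Bool := fun k => if h : k ∈ S then dd k h else (true, true) with hd
    have hfk : ∀ k ∈ S, f k = {ω | DB k (fun i => C i ω) = d k} := by
      intro k hk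
      rw [hdd k hk, hd]
      ext ω
      simp [dif_pos hk]
    have hL : (⋂ k ∈ S, f k) = ⋂ k ∈ S, {ω | DB k (fun i => C i ω) = d k} :=
      Set.iInter₂_congr hfk
    have hprod : ∏ k ∈ S, μ (f k) = 4⁻¹ ^ S.card := by
      rw [← Finset.prod_const]
      exact Finset.prod_congr rfl (fun k hk => by
        rw [hfk k hk]
        exact DB_single μ C hCmeas hCindep hCfair k (d k))
    rw [hL, DB_joint' μ C hCmeas hCindep hCfair S d]
    exact hprod.symm

end prob

/-- The projection `Yₙ = φ(X_{2n})` of the standard Manhattan walk started at the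
origin is the standard simple random walk on `ℤ²`: its increments are i.i.d.
uniform on `{±e₁, ±e₂}`. -/
theorem manhattan_projects_to_simple_random_walk
    {Ω : Type*} [MeasurableSpace Ω] (μ : Measure Ω) [IsProbabilityMeasure μ]
    (C : ℕ → Ω → Bool) (hCmeas : ∀ n, Measurable (C n))
    (hCindep : iIndepFun C μ)
    (hCfair : ∀ n, μ {ω | C n ω = true} = 2⁻¹)
    (X : ℕ → Ω → ℤ × ℤ)
    (hX0 : ∀ ω, X 0 ω = (0, 0))
    (hXrec : ∀ n ω, X (n + 1) ω = manhattanStepFun (X n ω) (C n ω)) :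
    iIndepFun
      (fun n ω => phiZ (X (2 * (n + 1)) ω) - phiZ (X (2 * n) ω)) μ ∧
    ∀ n : ℕ, ∀ v ∈ ({(1, 0), (-1, 0), (0, 1), (0, -1)} : Set (ℤ × ℤ)),
      μ {ω | phiZ (X (2 * (n + 1)) ω) - phiZ (X (2 * n) ω) = v} = 4⁻¹ := by
  have hformula : ∀ n ω, phiZ (X (2*(n+1)) ω) - phiZ (X (2*n) ω)
      = gB (DB n (fun i => C i ω)) := inc_formula C X hX0 hXrec
  have gB_inj : Function.Injective gB := by decide
  have hone : ∀ n (d : Bool × Bool),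
      {ω | phiZ (X (2*(n+1)) ω) - phiZ (X (2*n) ω) = gB d}
        = {ω | DB n (fun i => C i ω) = d} := by
    intro n d
    ext ω
    rw [Set.mem_setOf_eq, Set.mem_setOf_eq, hformula]
    exact ⟨fun h => gB_inj h, fun h => by rw [h]⟩
  constructor
  · have hfun : (fun n (ω : Ω) => phiZ (X (2*(n+1)) ω) - phiZ (X (2*n) ω))
        = fun n => (gB ∘ fun ω => DB n (fun i => C i ω)) := by
      funext n ω
      exact hformula n ω
    rw [hfun]
    exact (DB_indep μ C hCmeas hCindep hCfair).comp (fun _ => gB)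
      (fun _ => Measurable.of_discrete)
  · intro n v hv
    simp only [Set.mem_insert_iff, Set.mem_singleton_iff] at hv
    rcases hv with rfl | rfl | rfl | rfl
    · rw [show ((1, 0) : ℤ × ℤ) = gB (true, true) from rfl, hone]
      exact DB_single μ C hCmeas hCindep hCfair n _
    · rw [show ((-1, 0) : ℤ × ℤ) = gB (false, true) from rfl, hone]
      exact DB_single μ C hCmeas hCindep hCfair n _
    · rw [show ((0, 1) : ℤ × ℤ) = gB (false, false) from rfl, hone]
      exact DB_single μ C hCmeas hCindep hCfair n _
    · rw [show ((0, -1) : ℤ × ℤ) = gB (true, false) from rfl, hone]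
      exact DB_single μ C hCmeas hCindep hCfair n _
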